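/- In the super-popularity reduction, if M is a popular matching of I that excludes edge (x,y) and covers vertex t, then M ∪ {(x,d_x), (t',d_t)} is a super-popular matching of I'. -/

import Mathlib

open Finset
open scoped Classical
noncomputable section

/-- A bipartite preference instance: bipartite (multi)graph `G=(U,W;E)` where each
edge `e` has endpoints `src e ∈ U`, `dst e ∈ W`, and every vertex has a preference
valuation over edges (only values on incident edges are relevant); the valuation of
being unmatched (`∅`) is `0`. -/
structure PrefInst (U W E : Type) where
  src : E → U
  dst : E → W
  pU : U → E → ℝ
  pW : W → E → ℝ

namespace PrefInst

variable {U W E : Type} [DecidableEq U] [DecidableEq W] [DecidableEq E]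

/-- `M` is a matching: no two distinct edges of `M` share an endpoint. -/
def IsMatching (I : PrefInst U W E) (M : Finset E) : Prop :=
  ∀ e ∈ M, ∀ f ∈ M, e ≠ f → I.src e ≠ I.src f ∧ I.dst e ≠ I.dst f

/-- The edge of `M` incident to `u ∈ U` (if any): `M(u)`. -/
def mU (I : PrefInst U W E) (M : Finset E) (u : U) : Option E :=
  (M.filter fun e => I.src e = u).toList.head?

/-- The edge of `M` incident to `w ∈ W` (if any): `M(w)`. -/
def mW (I : PrefInst U W E) (M : Finset E) (w : W) : Option E :=
  (M.filter fun e => I.dst e = w).toList.head?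

/-- Valuation by `u` of a possible partner edge, with `p_u(∅) = 0`. -/
def valU (I : PrefInst U W E) (u : U) : Option E → ℝ
  | none => 0
  | some e => I.pU u e

def valW (I : PrefInst U W E) (w : W) : Option E → ℝ
  | none => 0
  | some e => I.pW w e

/-- `M` is maximal: no edge can be added keeping it a matching. -/
def Maximal (I : PrefInst U W E) (M : Finset E) : Prop :=
  ∀ e ∉ M, ¬ I.IsMatching (insert e M)

/-- Edge `e ∉ M` blocks `M` in the weak-stability sense: both endpoints strictly improve. -/
def Blocks (I : PrefInst U W E) (M : Finset E) (e : E) : Prop :=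
  e ∉ M ∧ I.valU (I.src e) (I.mU M (I.src e)) < I.pU (I.src e) e ∧
    I.valW (I.dst e) (I.mW M (I.dst e)) < I.pW (I.dst e) e

/-- Weak stability: no blocking edge. -/
def WeaklyStable (I : PrefInst U W E) (M : Finset E) : Prop :=
  ∀ e, ¬ I.Blocks M e

/-- Edge `e ∉ M` γ-min blocks `M`: both endpoints improve by at least their γ-threshold. -/
def GBlocks (I : PrefInst U W E) (γU γW : E → ℝ) (M : Finset E) (e : E) : Prop :=
  e ∉ M ∧ I.valU (I.src e) (I.mU M (I.src e)) + γU e ≤ I.pU (I.src e) e ∧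
    I.valW (I.dst e) (I.mW M (I.dst e)) + γW e ≤ I.pW (I.dst e) e

/-- γ-min stability: no γ-min blocking edge. -/
def GMinStable (I : PrefInst U W E) (γU γW : E → ℝ) (M : Finset E) : Prop :=
  ∀ e, ¬ I.GBlocks γU γW M e

/-- Standard vote of `u` comparing `M` to `N`: `+1` if strictly better in `M`,
`-1` if strictly better in `N`, `0` on equal value. -/
def sVoteU (I : PrefInst U W E) (M N : Finset E) (u : U) : ℤ :=
  if I.valU u (I.mU M u) = I.valU u (I.mU N u) then 0
  else if I.valU u (I.mU M u) < I.valU u (I.mU N u) then -1 else 1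

def sVoteW (I : PrefInst U W E) (M N : Finset E) (w : W) : ℤ :=
  if I.valW w (I.mW M w) = I.valW w (I.mW N w) then 0
  else if I.valW w (I.mW M w) < I.valW w (I.mW N w) then -1 else 1

/-- Weak vote of `u`: `0` if same partner, `-1` on strict improvement in `N`,
`+1` otherwise (partner changed without strict improvement). -/
def wVoteU (I : PrefInst U W E) (M N : Finset E) (u : U) : ℤ :=
  if I.mU M u = I.mU N u then 0
  else if I.valU u (I.mU M u) < I.valU u (I.mU N u) then -1 else 1

def wVoteW (I : PrefInst U W E) (M N : Finset E) (w : W) : ℤ :=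
  if I.mW M w = I.mW N w then 0
  else if I.valW w (I.mW M w) < I.valW w (I.mW N w) then -1 else 1

/-- Super vote of `u`: `0` if same partner, `-1` if the new partner is weakly
preferred (and different), `+1` only on strict worsening. -/
def supVoteU (I : PrefInst U W E) (M N : Finset E) (u : U) : ℤ :=
  if I.mU M u = I.mU N u then 0
  else if I.valU u (I.mU M u) ≤ I.valU u (I.mU N u) then -1 else 1

def supVoteW (I : PrefInst U W E) (M N : Finset E) (w : W) : ℤ :=
  if I.mW M w = I.mW N w then 0
  else if I.valW w (I.mW M w) ≤ I.valW w (I.mW N w) then -1 else 1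

/-- γ-vote of `u`: `0` if same partner; `-1` if `p_u(N(u)) ≥ p_u(M(u)) + γ_{N(u)}^u`;
`+1` otherwise (partner changed without a γ-sized improvement). -/
def gVoteU (I : PrefInst U W E) (γU : E → ℝ) (M N : Finset E) (u : U) : ℤ :=
  if I.mU M u = I.mU N u then 0
  else match I.mU N u with
    | none => 1
    | some e => if I.valU u (I.mU M u) + γU e ≤ I.pU u e then -1 else 1

def gVoteW (I : PrefInst U W E) (γW : E → ℝ) (M N : Finset E) (w : W) : ℤ :=
  if I.mW M w = I.mW N w then 0
  else match I.mW N w with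
    | none => 1
    | some e => if I.valW w (I.mW M w) + γW e ≤ I.pW w e then -1 else 1

variable [Fintype U] [Fintype W]

/-- Popularity (standard votes): `M` never loses a head-to-head comparison. -/
def Popular (I : PrefInst U W E) (M : Finset E) : Prop :=
  ∀ N, I.IsMatching N → 0 ≤ (∑ u, I.sVoteU M N u) + ∑ w, I.sVoteW M N w

/-- Weak popularity. -/
def WeaklyPopular (I : PrefInst U W E) (M : Finset E) : Prop :=
  ∀ N, I.IsMatching N → 0 ≤ (∑ u, I.wVoteU M N u) + ∑ w, I.wVoteW M N w

/-- Super popularity. -/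
def SuperPopular (I : PrefInst U W E) (M : Finset E) : Prop :=
  ∀ N, I.IsMatching N → 0 ≤ (∑ u, I.supVoteU M N u) + ∑ w, I.supVoteW M N w

/-- γ-popularity. -/
def GammaPopular (I : PrefInst U W E) (γU γW : E → ℝ) (M : Finset E) : Prop :=
  ∀ N, I.IsMatching N → 0 ≤ (∑ u, I.gVoteU γU M N u) + ∑ w, I.gVoteW γW M N w

end PrefInst
end

namespace PrefInst

variable {U W E : Type} [DecidableEq U] [DecidableEq W] [DecidableEq E]

/-- The super-popularity reduction instance `I'` built from a strict-preference
instance `I` with designated leaf `x ∈ U` (whose unique edge is `exy`, towards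
`y = dst exy`) and forced vertex `t ∈ U`.  New U-side agents: `x' = inr 0`,
`t' = inr 1`; new W-side agents: `d_x = inr 0`, `d_t = inr 1`; new edges:
`inr 0 = (x,d_x)`, `inr 1 = (x',d_x)`, `inr 2 = (t,d_t)`, `inr 3 = (t',d_t)`.
`d_x` prefers `x ≻ x'`; `d_t` has the tie `t ∼ t'`; `d_t` is appended to the end
of `t`'s list (encoded by shifting `t`'s original values up by `1` and valuing
`d_t` at `1/2`), and the entry `y` in `x`'s list becomes the tie `d_x ∼ y`. -/
noncomputable def superRed (I : PrefInst U W E) (x t : U) (exy : E) :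
    PrefInst (U ⊕ Fin 2) (W ⊕ Fin 2) (E ⊕ Fin 4) where
  src := Sum.elim (fun e => Sum.inl (I.src e))
    ![Sum.inl x, Sum.inr 0, Sum.inl t, Sum.inr 1]
  dst := Sum.elim (fun e => Sum.inl (I.dst e))
    ![Sum.inr 0, Sum.inr 0, Sum.inr 1, Sum.inr 1]
  pU := fun v d =>
    match v, d with
    | Sum.inl u, Sum.inl e => if u = t then I.pU u e + 1 else I.pU u e
    | Sum.inl u, Sum.inr j =>
        if j = 0 ∧ u = x then I.pU x exy
        else if j = 2 ∧ u = t then 1 / 2 else 0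
    | Sum.inr i, Sum.inr j =>
        if i = 0 ∧ j = 1 then 1 else if i = 1 ∧ j = 3 then 1 else 0
    | Sum.inr _, Sum.inl _ => 0
  pW := fun v d =>
    match v, d with
    | Sum.inl w, Sum.inl e => I.pW w e
    | Sum.inl _, Sum.inr _ => 0
    | Sum.inr i, Sum.inr j =>
        if i = 0 ∧ j = 0 then 2
        else if i = 0 ∧ j = 1 then 1
        else if i = 1 ∧ (j = 2 ∨ j = 3) then 1 else 0
    | Sum.inr _, Sum.inl _ => 0

end PrefInst


-- ===== auxiliary lemmas =====
set_option linter.unusedSectionVars false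

namespace PrefInst

variable {U W E : Type} [DecidableEq U] [DecidableEq W] [DecidableEq E]

theorem mU_none_iff (I : PrefInst U W E) (M : Finset E) (u : U) :
    I.mU M u = none ↔ ∀ e ∈ M, I.src e ≠ u := by
  simp [mU, List.head?_eq_none_iff, Finset.toList_eq_nil, Finset.filter_eq_empty_iff]

theorem mW_none_iff (I : PrefInst U W E) (M : Finset E) (w : W) :
    I.mW M w = none ↔ ∀ e ∈ M, I.dst e ≠ w := by
  simp [mW, List.head?_eq_none_iff, Finset.toList_eq_nil, Finset.filter_eq_empty_iff]

theorem mU_mem {I : PrefInst U W E} {M : Finset E} {u : U} {e : E}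
    (h : I.mU M u = some e) : e ∈ M ∧ I.src e = u := by
  have h' : (M.filter fun f => I.src f = u).toList.head? = some e := h
  have h2 := List.mem_of_mem_head? h'
  rw [Finset.mem_toList, Finset.mem_filter] at h2
  exact h2

theorem mW_mem {I : PrefInst U W E} {M : Finset E} {w : W} {e : E}
    (h : I.mW M w = some e) : e ∈ M ∧ I.dst e = w := by
  have h' : (M.filter fun f => I.dst f = w).toList.head? = some e := h
  have h2 := List.mem_of_mem_head? h'
  rw [Finset.mem_toList, Finset.mem_filter] at h2
  exact h2

theorem mU_some {I : PrefInst U W E} {M : Finset E} (hM : I.IsMatching M)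
    {u : U} {e : E} (he : e ∈ M) (hu : I.src e = u) : I.mU M u = some e := by
  have hf : M.filter (fun f => I.src f = u) = {e} := by
    ext f
    simp only [Finset.mem_filter, Finset.mem_singleton]
    constructor
    · rintro ⟨hf, hfu⟩
      by_contra hne
      exact (hM f hf e he hne).1 (hfu.trans hu.symm)
    · rintro rfl; exact ⟨he, hu⟩
  simp [mU, hf]

theorem mW_some {I : PrefInst U W E} {M : Finset E} (hM : I.IsMatching M)
    {w : W} {e : E} (he : e ∈ M) (hw : I.dst e = w) : I.mW M w = some e := by
  have hf : M.filter (fun f => I.dst f = w) = {e} := by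
    ext f
    simp only [Finset.mem_filter, Finset.mem_singleton]
    constructor
    · rintro ⟨hf, hfw⟩
      by_contra hne
      exact (hM f hf e he hne).2 (hfw.trans hw.symm)
    · rintro rfl; exact ⟨he, hw⟩
  simp [mW, hf]

/-- valuation determines partner, under strictness and positivity. -/
theorem valU_inj (I : PrefInst U W E) (hpU : ∀ u e, 0 < I.pU u e)
    (hstrictU : ∀ u e f, I.src e = u → I.src f = u → I.pU u e = I.pU u f → e = f)
    {u : U} {oM oN : Option E}
    (hM : ∀ e, oM = some e → I.src e = u) (hN : ∀ e, oN = some e → I.src e = u) :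
    (I.valU u oM = I.valU u oN ↔ oM = oN) := by
  cases oM with
  | none =>
    cases oN with
    | none => simp
    | some e => simp [valU, (ne_of_lt (hpU u e))]
  | some e =>
    cases oN with
    | none => simp [valU, (ne_of_gt (hpU u e))]
    | some f =>
      simp only [valU, Option.some.injEq]
      exact ⟨fun h => hstrictU u e f (hM e rfl) (hN f rfl) h, fun h => h ▸ rfl⟩

theorem valW_inj (I : PrefInst U W E) (hpW : ∀ w e, 0 < I.pW w e)
    (hstrictW : ∀ w e f, I.dst e = w → I.dst f = w → I.pW w e = I.pW w f → e = f)
    {w : W} {oM oN : Option E}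
    (hM : ∀ e, oM = some e → I.dst e = w) (hN : ∀ e, oN = some e → I.dst e = w) :
    (I.valW w oM = I.valW w oN ↔ oM = oN) := by
  cases oM with
  | none =>
    cases oN with
    | none => simp
    | some e => simp [valW, (ne_of_lt (hpW w e))]
  | some e =>
    cases oN with
    | none => simp [valW, (ne_of_gt (hpW w e))]
    | some f =>
      simp only [valW, Option.some.injEq]
      exact ⟨fun h => hstrictW w e f (hM e rfl) (hN f rfl) h, fun h => h ▸ rfl⟩

end PrefInst

/-- key vote-comparison lemma: a strict vote is at most the corresponding super
vote whenever value equality characterizes partner equality. -/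
theorem vote_trans {β : Type} (qM qN : β) (vM vN : ℝ) [Decidable (qM = qN)]
    [Decidable (vM = vN)] [Decidable (vM < vN)] [Decidable (vM ≤ vN)]
    (hvq : vM = vN ↔ qM = qN) :
    (if vM = vN then (0:ℤ) else if vM < vN then -1 else 1)
      ≤ (if qM = qN then (0:ℤ) else if vM ≤ vN then -1 else 1) := by
  by_cases h : vM = vN
  · rw [if_pos h, if_pos (hvq.mp h)]
  · rw [if_neg h, if_neg (fun hq => h (hvq.mpr hq))]
    by_cases hlt : vM < vN
    · rw [if_pos hlt, if_pos hlt.le]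
    · rw [if_neg hlt, if_neg (fun hle => h (hle.antisymm (not_lt.mp hlt)))]

open PrefInst in
/-- If `M` is a popular matching of `I` that excludes the edge
`(x,y)` and covers `t`, then `M ∪ {(x,d_x), (t',d_t)}` is a super-popular
matching of the reduction instance `I'`. -/
theorem superRed_popular_gives_super_popular
    {U W E : Type} [DecidableEq U] [DecidableEq W] [DecidableEq E]
    [Fintype U] [Fintype W]
    (I : PrefInst U W E)
    -- strict preferences, all edges acceptable (unmatched is strictly worst)
    (hpU : ∀ u e, 0 < I.pU u e) (hpW : ∀ w e, 0 < I.pW w e)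
    (hstrictU : ∀ u e f, I.src e = u → I.src f = u → I.pU u e = I.pU u f → e = f)
    (hstrictW : ∀ w e f, I.dst e = w → I.dst f = w → I.pW w e = I.pW w f → e = f)
    (x t : U) (exy : E) (z : U) (eyz : E)
    (hxt : x ≠ t)
    -- x is a leaf whose unique edge is exy = (x,y), y = I.dst exy
    (hx : I.src exy = x) (hleaf : ∀ e, I.src e = x → e = exy)
    -- y's only other neighbour is z, and y,z are each other's first choices
    (hz : I.src eyz = z) (hy : I.dst eyz = I.dst exy) (hzx : z ≠ x)
    (honly : ∀ e, I.dst e = I.dst exy → e = exy ∨ I.src e = z)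
    (hzfirst : ∀ e, I.src e = z → I.pU z e ≤ I.pU z eyz)
    (hyfirst : ∀ e, I.dst e = I.dst exy → I.pW (I.dst exy) e ≤ I.pW (I.dst exy) eyz)
    (M : Finset E) (hM : I.IsMatching M) (hMpop : I.Popular M)
    (hexy : exy ∉ M) (hcov : ∃ e ∈ M, I.src e = t) :
    (I.superRed x t exy).IsMatching
      (M.image Sum.inl ∪ {Sum.inr 0, Sum.inr 3}) ∧
    (I.superRed x t exy).SuperPopular
      (M.image Sum.inl ∪ {Sum.inr 0, Sum.inr 3}) := by
  classical
  obtain ⟨et, hetM, hett⟩ := hcov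
  set I' := I.superRed x t exy with hI'def
  set M' : Finset (E ⊕ Fin 4) := M.image Sum.inl ∪ {Sum.inr 0, Sum.inr 3} with hM'def
  -- structure of the reduced instance
  have sInl : ∀ e : E, I'.src (Sum.inl e) = Sum.inl (I.src e) := fun _ => rfl
  have dInl : ∀ e : E, I'.dst (Sum.inl e) = Sum.inl (I.dst e) := fun _ => rfl
  have s0 : I'.src (Sum.inr 0) = Sum.inl x := rfl
  have s1 : I'.src (Sum.inr 1) = Sum.inr 0 := rfl
  have s2 : I'.src (Sum.inr 2) = Sum.inl t := rfl
  have s3 : I'.src (Sum.inr 3) = Sum.inr 1 := rfl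
  have d0 : I'.dst (Sum.inr 0) = Sum.inr 0 := rfl
  have d1 : I'.dst (Sum.inr 1) = Sum.inr 0 := rfl
  have d2 : I'.dst (Sum.inr 2) = Sum.inr 1 := rfl
  have d3 : I'.dst (Sum.inr 3) = Sum.inr 1 := rfl
  have vNoneU : ∀ v, I'.valU v none = 0 := fun _ => rfl
  have vNoneW : ∀ v, I'.valW v none = 0 := fun _ => rfl
  have vInl : ∀ (u : U) (e : E), I'.valU (Sum.inl u) (some (Sum.inl e))
      = if u = t then I.pU u e + 1 else I.pU u e := fun _ _ => rfl
  have vWInl : ∀ (w : W) (e : E), I'.valW (Sum.inl w) (some (Sum.inl e)) = I.pW w e :=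
    fun _ _ => rfl
  have vx0 : I'.valU (Sum.inl x) (some (Sum.inr 0)) = I.pU x exy := by
    show I'.pU (Sum.inl x) (Sum.inr 0) = I.pU x exy
    norm_num [hI'def, PrefInst.superRed]
  have vt2 : I'.valU (Sum.inl t) (some (Sum.inr 2)) = 1/2 := by
    show I'.pU (Sum.inl t) (Sum.inr 2) = 1/2
    norm_num [hI'def, PrefInst.superRed, show ((2:Fin 4) = 0) ↔ False from by decide]
  have v01 : I'.valU (Sum.inr 0) (some (Sum.inr 1)) = 1 := by
    show I'.pU (Sum.inr 0) (Sum.inr 1) = 1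
    norm_num [hI'def, PrefInst.superRed]
  have v13 : I'.valU (Sum.inr 1) (some (Sum.inr 3)) = 1 := by
    show I'.pU (Sum.inr 1) (Sum.inr 3) = 1
    norm_num [hI'def, PrefInst.superRed]
  have w00 : I'.valW (Sum.inr 0) (some (Sum.inr 0)) = 2 := by
    show I'.pW (Sum.inr 0) (Sum.inr 0) = 2
    norm_num [hI'def, PrefInst.superRed]
  have w01 : I'.valW (Sum.inr 0) (some (Sum.inr 1)) = 1 := by
    show I'.pW (Sum.inr 0) (Sum.inr 1) = 1
    norm_num [hI'def, PrefInst.superRed]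
  have w12 : I'.valW (Sum.inr 1) (some (Sum.inr 2)) = 1 := by
    show I'.pW (Sum.inr 1) (Sum.inr 2) = 1
    norm_num [hI'def, PrefInst.superRed]
  have w13 : I'.valW (Sum.inr 1) (some (Sum.inr 3)) = 1 := by
    show I'.pW (Sum.inr 1) (Sum.inr 3) = 1
    norm_num [hI'def, PrefInst.superRed]
  have memM' : ∀ f, f ∈ M' ↔ (∃ e ∈ M, Sum.inl e = f) ∨ f = Sum.inr 0 ∨ f = Sum.inr 3 := by
    intro f
    simp only [hM'def, Finset.mem_union, Finset.mem_image, Finset.mem_insert,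
      Finset.mem_singleton]
  have hnotx : ∀ e ∈ M, I.src e ≠ x := fun e he hex => hexy (hleaf e hex ▸ he)
  -- M' is a matching
  have hM'match : I'.IsMatching M' := by
    intro f hf g hg hfg
    rw [memM'] at hf hg
    obtain ⟨e, he, rfl⟩ | rfl | rfl := hf <;> obtain ⟨e', he', rfl⟩ | rfl | rfl := hg
    · have h := hM e he e' he' (by rintro rfl; exact hfg rfl)
      exact ⟨fun hc => h.1 (Sum.inl.inj hc), fun hc => h.2 (Sum.inl.inj hc)⟩
    · exact ⟨fun hc => hnotx e he (Sum.inl.inj hc), by simp [dInl, d0]⟩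
    · exact ⟨by simp [sInl, s3], by simp [dInl, d3]⟩
    · exact ⟨fun hc => hnotx e' he' (Sum.inl.inj hc).symm, by simp [dInl, d0]⟩
    · exact absurd rfl hfg
    · exact ⟨by simp [s0, s3], by simp [d0, d3]⟩
    · exact ⟨by simp [sInl, s3], by simp [dInl, d3]⟩
    · exact ⟨by simp [s0, s3], by simp [d0, d3]⟩
    · exact absurd rfl hfg
  refine ⟨hM'match, ?_⟩
  intro N' hN'
  set N : Finset E := N'.preimage Sum.inl Sum.inl_injective.injOn with hNdef
  have memN : ∀ e, e ∈ N ↔ Sum.inl e ∈ N' := fun e => Finset.mem_preimage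
  have hNmatch : I.IsMatching N := by
    intro e he f hf hef
    have h := hN' (Sum.inl e) ((memN e).1 he) (Sum.inl f) ((memN f).1 hf)
      (by simpa using hef)
    exact ⟨fun hc => h.1 (by rw [sInl, sInl, hc]), fun hc => h.2 (by rw [dInl, dInl, hc])⟩
  have hpop := hMpop N hNmatch
  -- partner transfers
  have hmUM' : ∀ u : U, u ≠ x → I'.mU M' (Sum.inl u) = (I.mU M u).map Sum.inl := by
    intro u hux
    rcases hm : I.mU M u with _ | e
    · rw [Option.map_none, PrefInst.mU_none_iff]
      rw [PrefInst.mU_none_iff] at hm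
      intro f hf
      rw [memM'] at hf
      obtain ⟨e, he, rfl⟩ | rfl | rfl := hf
      · rw [sInl]; exact fun hc => hm e he (Sum.inl.inj hc)
      · rw [s0]; exact fun hc => hux (Sum.inl.inj hc).symm
      · rw [s3]; simp
    · obtain ⟨he, hsrc⟩ := PrefInst.mU_mem hm
      rw [Option.map_some]
      exact PrefInst.mU_some hM'match ((memM' _).2 (Or.inl ⟨e, he, rfl⟩)) (by rw [sInl, hsrc])
  have hmUN' : ∀ u : U, u ≠ x → u ≠ t → I'.mU N' (Sum.inl u) = (I.mU N u).map Sum.inl := by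
    intro u hux hut
    rcases hm : I.mU N u with _ | e
    · rw [Option.map_none, PrefInst.mU_none_iff]
      rw [PrefInst.mU_none_iff] at hm
      intro f hf
      rcases f with e | j
      · rw [sInl]; exact fun hc => hm e ((memN e).2 hf) (Sum.inl.inj hc)
      · fin_cases j
        · exact fun hc => hux (Sum.inl.inj hc).symm
        · exact fun hc => Sum.inr_ne_inl hc
        · exact fun hc => hut (Sum.inl.inj hc).symm
        · exact fun hc => Sum.inr_ne_inl hc
    · obtain ⟨he, hsrc⟩ := PrefInst.mU_mem hm
      rw [Option.map_some]
      exact PrefInst.mU_some hN' ((memN e).1 he) (by rw [sInl, hsrc])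
  have hmWM' : ∀ w : W, I'.mW M' (Sum.inl w) = (I.mW M w).map Sum.inl := by
    intro w
    rcases hm : I.mW M w with _ | e
    · rw [Option.map_none, PrefInst.mW_none_iff]
      rw [PrefInst.mW_none_iff] at hm
      intro f hf
      rw [memM'] at hf
      obtain ⟨e, he, rfl⟩ | rfl | rfl := hf
      · rw [dInl]; exact fun hc => hm e he (Sum.inl.inj hc)
      · rw [d0]; simp
      · rw [d3]; simp
    · obtain ⟨he, hdst⟩ := PrefInst.mW_mem hm
      rw [Option.map_some]
      exact PrefInst.mW_some hM'match ((memM' _).2 (Or.inl ⟨e, he, rfl⟩)) (by rw [dInl, hdst])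
  have hmWN' : ∀ w : W, I'.mW N' (Sum.inl w) = (I.mW N w).map Sum.inl := by
    intro w
    rcases hm : I.mW N w with _ | e
    · rw [Option.map_none, PrefInst.mW_none_iff]
      rw [PrefInst.mW_none_iff] at hm
      intro f hf
      rcases f with e | j
      · rw [dInl]; exact fun hc => hm e ((memN e).2 hf) (Sum.inl.inj hc)
      · fin_cases j
        · exact fun hc => Sum.inr_ne_inl hc
        · exact fun hc => Sum.inr_ne_inl hc
        · exact fun hc => Sum.inr_ne_inl hc
        · exact fun hc => Sum.inr_ne_inl hc
    · obtain ⟨he, hdst⟩ := PrefInst.mW_mem hm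
      rw [Option.map_some]
      exact PrefInst.mW_some hN' ((memN e).1 he) (by rw [dInl, hdst])
  -- U-side vote comparison
  have hU : ∀ u : U, I.sVoteU M N u ≤ I'.supVoteU M' N' (Sum.inl u) := by
    intro u
    by_cases hux : u = x
    · subst hux
      have hmx' : I'.mU M' (Sum.inl u) = some (Sum.inr 0) :=
        PrefInst.mU_some hM'match ((memM' _).2 (Or.inr (Or.inl rfl))) s0
      have hmx : I.mU M u = none := (PrefInst.mU_none_iff I M u).2 hnotx
      rw [PrefInst.sVoteU, PrefInst.supVoteU, hmx', hmx]
      by_cases h0 : (Sum.inr 0 : E ⊕ Fin 4) ∈ N'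
      · have hNx' : I'.mU N' (Sum.inl u) = some (Sum.inr 0) := PrefInst.mU_some hN' h0 s0
        have hNx : I.mU N u = none := by
          rw [PrefInst.mU_none_iff]
          intro e he hex
          exact (hN' (Sum.inl e) ((memN e).1 he) (Sum.inr 0) h0 (by simp)).1
            (by rw [sInl, hex, s0])
        rw [hNx', hNx]
        simp
      · by_cases hxy : exy ∈ N
        · have hNx' : I'.mU N' (Sum.inl u) = some (Sum.inl exy) :=
            PrefInst.mU_some hN' ((memN exy).1 hxy) (by rw [sInl, hx])
          have hNx : I.mU N u = some exy := PrefInst.mU_some hNmatch hxy hx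
          rw [hNx', hNx]
          rw [if_neg (show (some (Sum.inr 0) : Option (E ⊕ Fin 4)) ≠ some (Sum.inl exy)
            by simp)]
          rw [vx0, vInl, if_neg hxt, if_pos le_rfl]
          rw [if_neg (show ¬ I.valU u none = I.valU u (some exy) from ne_of_lt (hpU u exy))]
          rw [if_pos (show I.valU u none < I.valU u (some exy) from hpU u exy)]
        · have hNx' : I'.mU N' (Sum.inl u) = none := by
            rw [PrefInst.mU_none_iff]
            intro f hf
            rcases f with e | j
            · intro hc
              exact hxy ((memN exy).2 (by rwa [hleaf e (Sum.inl.inj hc)] at hf))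
            · fin_cases j
              · exact absurd hf h0
              · exact fun hc => Sum.inr_ne_inl hc
              · exact fun hc => hxt (Sum.inl.inj hc).symm
              · exact fun hc => Sum.inr_ne_inl hc
          have hNx : I.mU N u = none := by
            rw [PrefInst.mU_none_iff]
            intro e he hex
            exact hxy (hleaf e hex ▸ he)
          rw [hNx', hNx, if_pos rfl]
          rw [if_neg (show (some (Sum.inr 0) : Option (E ⊕ Fin 4)) ≠ none by simp)]
          rw [vx0, vNoneU, if_neg (not_le.mpr (hpU u exy))]
          norm_num
    · by_cases hut : u = t
      · subst hut
        have hmt' : I'.mU M' (Sum.inl u) = some (Sum.inl et) :=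
          PrefInst.mU_some hM'match ((memM' _).2 (Or.inl ⟨et, hetM, rfl⟩)) (by rw [sInl, hett])
        have hmt : I.mU M u = some et := PrefInst.mU_some hM hetM hett
        rw [PrefInst.sVoteU, PrefInst.supVoteU, hmt', hmt]
        by_cases h2 : (Sum.inr 2 : E ⊕ Fin 4) ∈ N'
        · have hNt' : I'.mU N' (Sum.inl u) = some (Sum.inr 2) := PrefInst.mU_some hN' h2 s2
          have hNt : I.mU N u = none := by
            rw [PrefInst.mU_none_iff]
            intro e he het2
            exact (hN' (Sum.inl e) ((memN e).1 he) (Sum.inr 2) h2 (by simp)).1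
              (by rw [sInl, het2, s2])
          rw [hNt', hNt]
          rw [if_neg (show (some (Sum.inl et) : Option (E ⊕ Fin 4)) ≠ some (Sum.inr 2)
            by simp)]
          rw [vInl, if_pos rfl, vt2]
          rw [if_neg (show ¬ (I.pU u et + 1 ≤ 1/2) by nlinarith [hpU u et])]
          rw [if_neg (show ¬ I.valU u (some et) = I.valU u none from ne_of_gt (hpU u et))]
          rw [if_neg (show ¬ I.valU u (some et) < I.valU u none from not_lt.mpr (hpU u et).le)]
        · rcases hmNt : I.mU N u with _ | e
          · have hNt' : I'.mU N' (Sum.inl u) = none := by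
              rw [PrefInst.mU_none_iff]
              rw [PrefInst.mU_none_iff] at hmNt
              intro f hf
              rcases f with e | j
              · rw [sInl]
                exact fun hc => hmNt e ((memN e).2 hf) (Sum.inl.inj hc)
              · fin_cases j
                · exact fun hc => hxt (Sum.inl.inj hc)
                · exact fun hc => Sum.inr_ne_inl hc
                · exact absurd hf h2
                · exact fun hc => Sum.inr_ne_inl hc
            rw [hNt']
            rw [if_neg (show (some (Sum.inl et) : Option (E ⊕ Fin 4)) ≠ none by simp)]
            rw [vInl, if_pos rfl, vNoneU]
            rw [if_neg (show ¬ (I.pU u et + 1 ≤ 0) by nlinarith [hpU u et])]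
            rw [if_neg (show ¬ I.valU u (some et) = I.valU u none from ne_of_gt (hpU u et))]
            rw [if_neg (show ¬ I.valU u (some et) < I.valU u none from
              not_lt.mpr (hpU u et).le)]
          · obtain ⟨heN, hesrc⟩ := PrefInst.mU_mem hmNt
            have hNt' : I'.mU N' (Sum.inl u) = some (Sum.inl e) :=
              PrefInst.mU_some hN' ((memN e).1 heN) (by rw [sInl, hesrc])
            rw [hNt']
            rw [vInl, vInl, if_pos rfl, if_pos rfl]
            simp only [add_le_add_iff_right, PrefInst.valU]
            refine vote_trans _ _ _ _ ?_
            constructor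
            · intro h
              rw [hstrictU u et e hett hesrc h]
            · intro h
              rw [Sum.inl.inj (Option.some.inj h)]
      · rw [PrefInst.sVoteU, PrefInst.supVoteU, hmUM' u hux, hmUN' u hux hut]
        have hvM : I'.valU (Sum.inl u) ((I.mU M u).map Sum.inl) = I.valU u (I.mU M u) := by
          rcases I.mU M u with _ | e
          · rfl
          · rw [Option.map_some, vInl, if_neg hut]; rfl
        have hvN : I'.valU (Sum.inl u) ((I.mU N u).map Sum.inl) = I.valU u (I.mU N u) := by
          rcases I.mU N u with _ | e
          · rfl
          · rw [Option.map_some, vInl, if_neg hut]; rfl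
        rw [hvM, hvN]
        exact vote_trans _ _ _ _
          ((I.valU_inj hpU hstrictU (oM := I.mU M u) (oN := I.mU N u)
            (fun e he => (PrefInst.mU_mem he).2)
            (fun e he => (PrefInst.mU_mem he).2)).trans
            (Option.map_injective Sum.inl_injective).eq_iff.symm)
  -- W-side vote comparison
  have hW : ∀ w : W, I.sVoteW M N w ≤ I'.supVoteW M' N' (Sum.inl w) := by
    intro w
    have hvM : ∀ o : Option E, I'.valW (Sum.inl w) (o.map Sum.inl) = I.valW w o := by
      rintro (_ | e) <;> rfl
    rw [PrefInst.sVoteW, PrefInst.supVoteW, hmWM' w, hmWN' w, hvM, hvM]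
    exact vote_trans _ _ _ _
      ((I.valW_inj hpW hstrictW (oM := I.mW M w) (oN := I.mW N w)
        (fun e he => (PrefInst.mW_mem he).2)
        (fun e he => (PrefInst.mW_mem he).2)).trans
        (Option.map_injective Sum.inl_injective).eq_iff.symm)
  -- x' and d_x
  have hxdx : 0 ≤ I'.supVoteU M' N' (Sum.inr 0) + I'.supVoteW M' N' (Sum.inr 0) := by
    have hmu0 : I'.mU M' (Sum.inr 0) = none := by
      rw [PrefInst.mU_none_iff]
      intro f hf
      rw [memM'] at hf
      obtain ⟨e, he, rfl⟩ | rfl | rfl := hf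
      · exact fun hc => Sum.inl_ne_inr hc
      · exact fun hc => Sum.inl_ne_inr hc
      · rw [s3]; simp
    have hmw0 : I'.mW M' (Sum.inr 0) = some (Sum.inr 0) :=
      PrefInst.mW_some hM'match ((memM' _).2 (Or.inr (Or.inl rfl))) d0
    rw [PrefInst.supVoteU, PrefInst.supVoteW, hmu0, hmw0]
    by_cases h0 : (Sum.inr 0 : E ⊕ Fin 4) ∈ N'
    · have h1 : (Sum.inr 1 : E ⊕ Fin 4) ∉ N' := fun h1 =>
        (hN' _ h0 _ h1 (by simp)).2 (by rw [d0, d1])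
      have hu : I'.mU N' (Sum.inr 0) = none := by
        rw [PrefInst.mU_none_iff]
        intro f hf
        rcases f with e | j
        · exact fun hc => Sum.inl_ne_inr hc
        · fin_cases j
          · exact fun hc => Sum.inl_ne_inr hc
          · exact absurd hf h1
          · exact fun hc => Sum.inl_ne_inr hc
          · exact fun hc => absurd (Sum.inr.inj hc) (by decide)
      have hw : I'.mW N' (Sum.inr 0) = some (Sum.inr 0) := PrefInst.mW_some hN' h0 d0
      rw [hu, hw]
      simp
    · by_cases h1 : (Sum.inr 1 : E ⊕ Fin 4) ∈ N'
      · have hu : I'.mU N' (Sum.inr 0) = some (Sum.inr 1) := PrefInst.mU_some hN' h1 s1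
        have hw : I'.mW N' (Sum.inr 0) = some (Sum.inr 1) := PrefInst.mW_some hN' h1 d1
        rw [hu, hw]
        rw [if_neg (show (none : Option (E ⊕ Fin 4)) ≠ some (Sum.inr 1) by simp)]
        rw [vNoneU, v01, if_pos (by norm_num : (0:ℝ) ≤ 1)]
        rw [if_neg (show (some (Sum.inr 0) : Option (E ⊕ Fin 4)) ≠ some (Sum.inr 1) by simp)]
        rw [w00, w01, if_neg (by norm_num : ¬ ((2:ℝ) ≤ 1))]
        norm_num
      · have hu : I'.mU N' (Sum.inr 0) = none := by
          rw [PrefInst.mU_none_iff]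
          intro f hf
          rcases f with e | j
          · exact fun hc => Sum.inl_ne_inr hc
          · fin_cases j
            · exact fun hc => Sum.inl_ne_inr hc
            · exact absurd hf h1
            · exact fun hc => Sum.inl_ne_inr hc
            · exact fun hc => absurd (Sum.inr.inj hc) (by decide)
        have hw : I'.mW N' (Sum.inr 0) = none := by
          rw [PrefInst.mW_none_iff]
          intro f hf
          rcases f with e | j
          · exact fun hc => Sum.inl_ne_inr hc
          · fin_cases j
            · exact absurd hf h0
            · exact absurd hf h1
            · exact fun hc => absurd (Sum.inr.inj hc) (by decide)
            · exact fun hc => absurd (Sum.inr.inj hc) (by decide)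
        rw [hu, hw, if_pos rfl]
        rw [if_neg (show (some (Sum.inr 0) : Option (E ⊕ Fin 4)) ≠ none by simp)]
        rw [w00, vNoneW, if_neg (by norm_num : ¬ ((2:ℝ) ≤ 0))]
        norm_num
  -- t' and d_t
  have htdt : 0 ≤ I'.supVoteU M' N' (Sum.inr 1) + I'.supVoteW M' N' (Sum.inr 1) := by
    have hmu1 : I'.mU M' (Sum.inr 1) = some (Sum.inr 3) :=
      PrefInst.mU_some hM'match ((memM' _).2 (Or.inr (Or.inr rfl))) s3
    have hmw1 : I'.mW M' (Sum.inr 1) = some (Sum.inr 3) :=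
      PrefInst.mW_some hM'match ((memM' _).2 (Or.inr (Or.inr rfl))) d3
    rw [PrefInst.supVoteU, PrefInst.supVoteW, hmu1, hmw1]
    by_cases h3 : (Sum.inr 3 : E ⊕ Fin 4) ∈ N'
    · have hu : I'.mU N' (Sum.inr 1) = some (Sum.inr 3) := PrefInst.mU_some hN' h3 s3
      have hw : I'.mW N' (Sum.inr 1) = some (Sum.inr 3) := PrefInst.mW_some hN' h3 d3
      rw [hu, hw]
      simp
    · have hu : I'.mU N' (Sum.inr 1) = none := by
        rw [PrefInst.mU_none_iff]
        intro f hf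
        rcases f with e | j
        · exact fun hc => Sum.inl_ne_inr hc
        · fin_cases j
          · exact fun hc => Sum.inl_ne_inr hc
          · exact fun hc => absurd (Sum.inr.inj hc) (by decide)
          · exact fun hc => Sum.inl_ne_inr hc
          · exact absurd hf h3
      rw [hu]
      rw [if_neg (show (some (Sum.inr 3) : Option (E ⊕ Fin 4)) ≠ none by simp)]
      rw [v13, vNoneU, if_neg (by norm_num : ¬ ((1:ℝ) ≤ 0))]
      by_cases h2 : (Sum.inr 2 : E ⊕ Fin 4) ∈ N'
      · have hw : I'.mW N' (Sum.inr 1) = some (Sum.inr 2) := PrefInst.mW_some hN' h2 d2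
        rw [hw]
        rw [if_neg (show (some (Sum.inr 3) : Option (E ⊕ Fin 4)) ≠ some (Sum.inr 2) by simp)]
        rw [w13, w12, if_pos le_rfl]
        norm_num
      · have hw : I'.mW N' (Sum.inr 1) = none := by
          rw [PrefInst.mW_none_iff]
          intro f hf
          rcases f with e | j
          · exact fun hc => Sum.inl_ne_inr hc
          · fin_cases j
            · exact fun hc => absurd (Sum.inr.inj hc) (by decide)
            · exact fun hc => absurd (Sum.inr.inj hc) (by decide)
            · exact absurd hf h2
            · exact absurd hf h3
        rw [hw]
        rw [if_neg (show (some (Sum.inr 3) : Option (E ⊕ Fin 4)) ≠ none by simp)]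
        rw [w13, vNoneW, if_neg (by norm_num : ¬ ((1:ℝ) ≤ 0))]
        norm_num
  have S1 : ∑ u : U, I.sVoteU M N u ≤ ∑ u : U, I'.supVoteU M' N' (Sum.inl u) :=
    Finset.sum_le_sum fun u _ => hU u
  have S2 : ∑ w : W, I.sVoteW M N w ≤ ∑ w : W, I'.supVoteW M' N' (Sum.inl w) :=
    Finset.sum_le_sum fun w _ => hW w
  rw [Fintype.sum_sum_type, Fintype.sum_sum_type, Fin.sum_univ_two, Fin.sum_univ_two]
  linarith [hpop, S1, S2, hxdx, htdt]
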